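/- Under the hypotheses of the recursion (p_{n,k}/f_0)' = c_k q_{n-1,k-1} + d_k q_{n-1,k} with c_k ≠ 0 for k=1,...,n and d_k ≠ 0 for k=0,...,n-1, if f_0 = Σ_{k=0}^n β_k p_{n,k}, then β_0 = f_0(a)/p_{n,0}(a) and β_k = (-1)^k (d_0 ⋯ d_{k-1})/(c_1 ⋯ c_k) · f_0(a)/p_{n,0}(a) for k = 1,...,n. -/

import Mathlib

open Set Finset

/-- `f` has a zero of order exactly `k` at `a`. -/
def ZeroOfOrder (f : ℝ → ℝ) (a : ℝ) (k : ℕ) : Prop :=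
  (∀ i < k, iteratedDeriv i f a = 0) ∧ iteratedDeriv k f a ≠ 0

/-- Theorem ThmRep: given the recursion `(p_{n,k}/f₀)' = c_k q_{n-1,k-1} + d_k q_{n-1,k}`
with `c_k ≠ 0` for `k = 1,…,n` and `d_k ≠ 0` for `k = 0,…,n-1`, if
`f₀ = Σ β_k p_{n,k}`, then `β₀ = f₀(a)/p_{n,0}(a)` and
`β_k = (-1)^k (d₀⋯d_{k-1})/(c₁⋯c_k) · f₀(a)/p_{n,0}(a)` for `k = 1,…,n`. -/
theorem representation_of_f0
    (n : ℕ) (hn : 1 ≤ n) (a b : ℝ) (hab : a < b)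
    (p : ℕ → ℝ → ℝ) (q : ℕ → ℝ → ℝ) (f₀ : ℝ → ℝ) (β c d : ℕ → ℝ)
    (hpsmooth : ∀ k ≤ n, ContDiff ℝ n (p k))
    (hpa : ∀ k ≤ n, ZeroOfOrder (p k) a k)
    (hpb : ∀ k ≤ n, ZeroOfOrder (p k) b (n - k))
    (hqa : ∀ k ≤ n - 1, ZeroOfOrder (q k) a k)
    (hqb : ∀ k ≤ n - 1, ZeroOfOrder (q k) b (n - 1 - k))
    (hqind : LinearIndependent ℝ (fun k : Fin n => (Icc a b).restrict (q (k : ℕ))))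
    (hf₀pos : ∀ x ∈ Icc a b, 0 < f₀ x)
    (hc0 : c 0 = 0) (hdn : d n = 0)
    (hc : ∀ k, 1 ≤ k → k ≤ n → c k ≠ 0)
    (hd : ∀ k ≤ n - 1, d k ≠ 0)
    (hrec : ∀ k ≤ n, ∀ x ∈ Icc a b,
      deriv (fun y => p k y / f₀ y) x = c k * q (k - 1) x + d k * q k x)
    (hf₀ : ∀ x ∈ Icc a b, f₀ x = ∑ k ∈ Finset.range (n + 1), β k * p k x) :
    β 0 = f₀ a / p 0 a ∧
    ∀ k, 1 ≤ k → k ≤ n →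
      β k = (-1 : ℝ) ^ k * (∏ i ∈ Finset.range k, d i) / (∏ i ∈ Finset.range k, c (i + 1)) *
        (f₀ a / p 0 a) := by
  have hab' : a ≤ b := hab.le
  have haI : a ∈ Icc a b := ⟨le_refl a, hab'⟩
  have hbI : b ∈ Icc a b := ⟨hab', le_refl b⟩
  have hpdiff : ∀ k, k ≤ n → Differentiable ℝ (p k) := fun k hk =>
    (hpsmooth k hk).differentiable (by exact_mod_cast (Nat.one_le_iff_ne_zero.mp hn))
  have hp0a : p 0 a ≠ 0 := by
    have := (hpa 0 (Nat.zero_le n)).2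
    simpa [iteratedDeriv_zero] using this
  have hpka : ∀ k, k ≤ n → k ≠ 0 → p k a = 0 := by
    intro k hk hk0
    have := (hpa k hk).1 0 (Nat.pos_of_ne_zero hk0)
    simpa [iteratedDeriv_zero] using this
  have hq0a : q 0 a ≠ 0 := by
    have := (hqa 0 (Nat.zero_le _)).2
    simpa [iteratedDeriv_zero] using this
  have hpnb : p n b ≠ 0 := by
    have := (hpb n le_rfl).2
    simpa [iteratedDeriv_zero, Nat.sub_self] using this
  have hqn1b : q (n - 1) b ≠ 0 := by
    have := (hqb (n - 1) le_rfl).2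
    simpa [iteratedDeriv_zero, Nat.sub_self] using this
  -- the smooth model of f₀
  set G : ℝ → ℝ := fun x => ∑ k ∈ Finset.range (n + 1), β k * p k x with hGdef
  have hGdiff : ∀ x, DifferentiableAt ℝ G x := by
    intro x
    apply DifferentiableAt.fun_sum
    intro k hk
    exact ((hpdiff k (Nat.lt_succ_iff.mp (Finset.mem_range.mp hk))).differentiableAt).const_mul
      (β k)
  -- if p k / f₀ is differentiable at x and p k x ≠ 0 then f₀ is differentiable at x
  have key_diff : ∀ (k : ℕ), k ≤ n → ∀ x ∈ Icc a b, p k x ≠ 0 →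
      DifferentiableAt ℝ (fun y => p k y / f₀ y) x → DifferentiableAt ℝ f₀ x := by
    intro k hk x hx hpx hdiv
    have hev : ∀ᶠ y in nhds x, p k y ≠ 0 :=
      ((hpdiff k hk).continuous.continuousAt).eventually_ne hpx
    have heq : (fun y => p k y / (p k y / f₀ y)) =ᶠ[nhds x] f₀ := by
      filter_upwards [hev] with y hy
      by_cases h : f₀ y = 0
      · simp [h]
      · field_simp
    have hval : p k x / f₀ x ≠ 0 := div_ne_zero hpx (hf₀pos x hx).ne'
    have hD : DifferentiableAt ℝ (fun y => p k y / (p k y / f₀ y)) x :=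
      ((hpdiff k hk).differentiableAt).div hdiv hval
    exact hD.congr_of_eventuallyEq heq.symm
  have hf₀diff : ∀ x ∈ Icc a b, DifferentiableAt ℝ f₀ x := by
    intro x hx
    rcases eq_or_lt_of_le hx.1 with rfl | hax
    · apply key_diff 0 (Nat.zero_le n) a haI hp0a
      apply differentiableAt_of_deriv_ne_zero
      rw [hrec 0 (Nat.zero_le n) a haI]
      simp only [hc0, zero_mul, zero_add]
      exact mul_ne_zero (hd 0 (Nat.zero_le _)) hq0a
    rcases eq_or_lt_of_le hx.2 with rfl | hxb
    · apply key_diff n le_rfl x hbI hpnb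
      apply differentiableAt_of_deriv_ne_zero
      rw [hrec n le_rfl x hbI]
      simp only [hdn, zero_mul, add_zero]
      exact mul_ne_zero (hc n hn le_rfl) hqn1b
    · have hnb : Icc a b ∈ nhds x := Icc_mem_nhds hax hxb
      exact (hGdiff x).congr_of_eventuallyEq
        (Filter.eventually_of_mem hnb fun y hy => hf₀ y hy)
  have hderiv_eq : ∀ x ∈ Icc a b, deriv f₀ x = deriv G x := by
    intro x hx
    have h1 : HasDerivWithinAt f₀ (deriv f₀ x) (Icc a b) x :=
      ((hf₀diff x hx).hasDerivAt).hasDerivWithinAt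
    have h2 : HasDerivWithinAt G (deriv f₀ x) (Icc a b) x :=
      h1.congr (fun y hy => (hf₀ y hy).symm) (hf₀ x hx).symm
    have h3 : HasDerivWithinAt G (deriv G x) (Icc a b) x :=
      ((hGdiff x).hasDerivAt).hasDerivWithinAt
    exact UniqueDiffWithinAt.eq_deriv _ (uniqueDiffOn_Icc hab x hx) h2 h3
  -- the key vanishing identity
  have key : ∀ x ∈ Icc a b,
      ∑ k ∈ Finset.range (n + 1), β k * (c k * q (k - 1) x + d k * q k x) = 0 := by
    intro x hx
    have hf₀x : f₀ x ≠ 0 := (hf₀pos x hx).ne'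
    have hdiffk : ∀ k ∈ Finset.range (n + 1),
        DifferentiableAt ℝ (fun y => β k * (p k y / f₀ y)) x := by
      intro k hk
      exact (((hpdiff k (Nat.lt_succ_iff.mp (Finset.mem_range.mp hk))).differentiableAt).div
        (hf₀diff x hx) hf₀x).const_mul (β k)
    have e1 : deriv (fun y => ∑ k ∈ Finset.range (n + 1), β k * (p k y / f₀ y)) x
        = ∑ k ∈ Finset.range (n + 1), β k * (c k * q (k - 1) x + d k * q k x) := by
      rw [deriv_fun_sum hdiffk]
      refine Finset.sum_congr rfl fun k hk => ?_
      have hkn : k ≤ n := Nat.lt_succ_iff.mp (Finset.mem_range.mp hk)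
      rw [deriv_const_mul _ (by
        have h : DifferentiableAt ℝ (fun y => p k y / f₀ y) x :=
          ((hpdiff k hkn).differentiableAt).div (hf₀diff x hx) hf₀x
        exact h)]
      rw [hrec k hkn x hx]
    have e2 : (fun y => ∑ k ∈ Finset.range (n + 1), β k * (p k y / f₀ y))
        = fun y => G y / f₀ y := by
      funext y
      rw [hGdef]
      rw [Finset.sum_div]
      exact Finset.sum_congr rfl fun k _ => (mul_div_assoc _ _ _).symm
    have e3 : deriv (fun y => G y / f₀ y) x = 0 := by
      have hGx : G x = f₀ x := (hf₀ x hx).symm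
      rw [deriv_fun_div (hGdiff x) (hf₀diff x hx) hf₀x, hderiv_eq x hx, hGx]
      ring
    rw [← e1, e2, e3]
  -- reindexed identity
  have key2 : ∀ x ∈ Icc a b,
      ∑ j ∈ Finset.range n, (β j * d j + β (j + 1) * c (j + 1)) * q j x = 0 := by
    intro x hx
    have h := key x hx
    have hsplit : ∑ j ∈ Finset.range n, (β j * d j + β (j + 1) * c (j + 1)) * q j x
        = ∑ k ∈ Finset.range (n + 1), β k * (c k * q (k - 1) x + d k * q k x) := by
      rw [show (∑ k ∈ Finset.range (n + 1), β k * (c k * q (k - 1) x + d k * q k x))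
          = (∑ k ∈ Finset.range (n + 1), β k * c k * q (k - 1) x)
            + ∑ k ∈ Finset.range (n + 1), β k * d k * q k x from by
        rw [← Finset.sum_add_distrib]; exact Finset.sum_congr rfl fun k _ => by ring]
      rw [Finset.sum_range_succ' (fun k => β k * c k * q (k - 1) x) n,
          Finset.sum_range_succ (fun k => β k * d k * q k x) n]
      simp only [hc0, hdn, mul_zero, zero_mul, add_zero, Nat.add_sub_cancel]
      rw [← Finset.sum_add_distrib]
      exact Finset.sum_congr rfl fun k _ => by ring
    rw [hsplit, h]
  -- linear independence gives the two-term recursion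
  have hγ : ∀ j, j < n → β j * d j + β (j + 1) * c (j + 1) = 0 := by
    intro j hj
    have hz : ∑ i : Fin n,
        (fun i : Fin n => β (i : ℕ) * d (i : ℕ) + β ((i : ℕ) + 1) * c ((i : ℕ) + 1)) i
          • (Icc a b).restrict (q (i : ℕ)) = 0 := by
      funext x
      simp only [Finset.sum_apply, Pi.smul_apply, Set.restrict_apply, smul_eq_mul,
        Pi.zero_apply]
      show ∑ i : Fin n, (β i * d i + β (i + 1) * c (i + 1)) * q i (x : ℝ) = 0
      rw [Fin.sum_univ_eq_sum_range
        (fun i => (β i * d i + β (i + 1) * c (i + 1)) * q i (x : ℝ)) n]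
      exact key2 (x : ℝ) x.2
    exact Fintype.linearIndependent_iff.mp hqind _ hz ⟨j, hj⟩
  -- value of β 0
  have hsum_a : ∑ k ∈ Finset.range (n + 1), β k * p k a = β 0 * p 0 a := by
    apply Finset.sum_eq_single_of_mem 0 (Finset.mem_range.mpr (Nat.succ_pos n))
    intro k hk hk0
    rw [hpka k (Nat.lt_succ_iff.mp (Finset.mem_range.mp hk)) hk0, mul_zero]
  have hβ0 : β 0 = f₀ a / p 0 a := by
    rw [eq_div_iff hp0a, hf₀ a haI, hsum_a]
  -- closed form by induction
  have hform : ∀ k, k ≤ n →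
      β k = (-1 : ℝ) ^ k * (∏ i ∈ Finset.range k, d i) / (∏ i ∈ Finset.range k, c (i + 1))
        * β 0 := by
    intro k
    induction k with
    | zero => intro _; simp
    | succ k ih =>
      intro hk1
      have hk : k ≤ n := Nat.le_of_succ_le hk1
      have ihk := ih hk
      have hγk := hγ k (Nat.lt_of_succ_le hk1)
      have hck : c (k + 1) ≠ 0 := hc (k + 1) (Nat.succ_le_succ (Nat.zero_le k)) hk1
      have hprodk : (∏ i ∈ Finset.range k, c (i + 1)) ≠ 0 := by
        rw [Finset.prod_ne_zero_iff]
        intro i hi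
        exact hc (i + 1) (Nat.le_add_left 1 i)
          (by have := Finset.mem_range.mp hi; omega)
      have hβk1 : β (k + 1) = -(d k) * β k / c (k + 1) := by
        field_simp
        linarith [hγk]
      rw [hβk1, ihk, Finset.prod_range_succ, Finset.prod_range_succ, pow_succ]
      field_simp
  refine ⟨hβ0, fun k hk1 hkn => ?_⟩
  rw [hform k hkn, hβ0]
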